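/- If the bidual SDP (8) has a solution and rank(A) = m < n, then its solution set contains a matrix of rank at least n − m. More precisely, from any optimal X* one can repeatedly add rank-one matrices wwᵀ with w ∈ W₀ orthogonal to the range of the current solution, strictly increasing the rank at each step, until reaching an optimal solution of rank ≥ n − m. -/

import Mathlib

/-- Index type for ℝ^{2n+1}, split into blocks (z₀, z, x). -/
abbrev Idx (n : ℕ) := Fin 1 ⊕ (Fin n ⊕ Fin n)

/-- The objective matrix Q: (z₀,z)-block ½eᵀ, symmetric, zeros elsewhere. -/
noncomputable def Qmat (n : ℕ) : Matrix (Idx n) (Idx n) ℝ := fun p q =>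
  match p, q with
  | Sum.inl _, Sum.inr (Sum.inl _) => 1 / 2
  | Sum.inr (Sum.inl _), Sum.inl _ => 1 / 2
  | _, _ => 0

/-- The constraint matrix A_j: (z₀,x)-block ½a_jᵀ, symmetric. -/
noncomputable def Amat {m n : ℕ} (A : Matrix (Fin m) (Fin n) ℝ) (j : Fin m) :
    Matrix (Idx n) (Idx n) ℝ := fun p q =>
  match p, q with
  | Sum.inl _, Sum.inr (Sum.inr i) => A j i / 2
  | Sum.inr (Sum.inr i), Sum.inl _ => A j i / 2
  | _, _ => 0

/-- E₀ = diag(1,0,…,0). -/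
noncomputable def E0mat (n : ℕ) : Matrix (Idx n) (Idx n) ℝ := fun p q =>
  match p, q with
  | Sum.inl _, Sum.inl _ => 1
  | _, _ => 0

/-- E_i: (z₀,z)-entries −e_i (symmetric) and z-block 2·diag(e_i). -/
noncomputable def Emat (n : ℕ) (i : Fin n) : Matrix (Idx n) (Idx n) ℝ := fun p q =>
  match p, q with
  | Sum.inl _, Sum.inr (Sum.inl j) => if j = i then -1 else 0
  | Sum.inr (Sum.inl j), Sum.inl _ => if j = i then -1 else 0
  | Sum.inr (Sum.inl j), Sum.inr (Sum.inl j') => if j = i ∧ j' = i then 2 else 0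
  | _, _ => 0

/-- C_i: (z,x)-block diag(e_i), symmetric. -/
noncomputable def Cmat (n : ℕ) (i : Fin n) : Matrix (Idx n) (Idx n) ℝ := fun p q =>
  match p, q with
  | Sum.inr (Sum.inl j), Sum.inr (Sum.inr j') => if j = i ∧ j' = i then 1 else 0
  | Sum.inr (Sum.inr j), Sum.inr (Sum.inl j') => if j = i ∧ j' = i then 1 else 0
  | _, _ => 0

/-- Feasibility for the bidual SDP (8). -/
def BidualFeasible {m n : ℕ} (A : Matrix (Fin m) (Fin n) ℝ) (y : Fin m → ℝ)
    (X : Matrix (Idx n) (Idx n) ℝ) : Prop :=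
  X.PosSemidef ∧ (∀ j, (Amat A j * X).trace = y j) ∧ (E0mat n * X).trace = 1 ∧
    ∀ i, (Emat n i * X).trace = 0 ∧ (Cmat n i * X).trace = 0

/-- Optimality for the bidual SDP (8). -/
def BidualOptimal {m n : ℕ} (A : Matrix (Fin m) (Fin n) ℝ) (y : Fin m → ℝ)
    (X : Matrix (Idx n) (Idx n) ℝ) : Prop :=
  BidualFeasible A y X ∧
    ∀ Y, BidualFeasible A y Y → (Qmat n * Y).trace ≤ (Qmat n * X).trace

/-- Membership in W₀: the z₀ and z coordinates vanish and the x coordinates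
lie in ker A. -/
def memW0 {m n : ℕ} (A : Matrix (Fin m) (Fin n) ℝ) (w : Idx n → ℝ) : Prop :=
  w (Sum.inl 0) = 0 ∧ (∀ i : Fin n, w (Sum.inr (Sum.inl i)) = 0) ∧
    A.mulVec (fun j => w (Sum.inr (Sum.inr j))) = 0


open Matrix Module

private lemma psd_add' {N : Type*} [Fintype N] {P G : Matrix N N ℝ}
    (hP : P.PosSemidef) (hG : G.PosSemidef) : (P + G).PosSemidef :=
  ⟨hP.1.add hG.1, fun x => by
    simpa [mul_add, add_mul] using add_nonneg (hP.2 x) (hG.2 x)⟩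

private lemma rank_le_psd_add' {N : Type*} [Fintype N] [DecidableEq N]
    {P G : Matrix N N ℝ} (hP : P.PosSemidef) (hG : G.PosSemidef) :
    G.rank ≤ (P + G).rank := by
  have hker : LinearMap.ker (P + G).mulVecLin ≤ LinearMap.ker G.mulVecLin := by
    intro x hx
    rw [LinearMap.mem_ker, mulVecLin_apply] at hx ⊢
    have h0 : x ⬝ᵥ (P + G) *ᵥ x = 0 := by rw [hx, dotProduct_zero]
    rw [add_mulVec, dotProduct_add] at h0
    have h1 : (0:ℝ) ≤ x ⬝ᵥ P *ᵥ x := by simpa using hP.dotProduct_mulVec_nonneg x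
    have h2 : (0:ℝ) ≤ x ⬝ᵥ G *ᵥ x := by simpa using hG.dotProduct_mulVec_nonneg x
    have h3 : x ⬝ᵥ G *ᵥ x = 0 := by linarith
    exact (hG.dotProduct_mulVec_zero_iff x).mp (by simpa using h3)
  have e1 := LinearMap.finrank_range_add_finrank_ker (P + G).mulVecLin
  have e2 := LinearMap.finrank_range_add_finrank_ker G.mulVecLin
  have hm := Submodule.finrank_mono hker
  unfold Matrix.rank
  omega

theorem stmt_18 (m n : ℕ) (A : Matrix (Fin m) (Fin n) ℝ) (y : Fin m → ℝ)
    (hrank : A.rank = m) (hmn : m < n)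
    (hne : ∃ X, BidualOptimal A y X) :
    ∃ X, BidualOptimal A y X ∧ n - m ≤ X.rank := by
  classical
  obtain ⟨X, hXfeas, hXopt⟩ := hne
  have hcard : Module.finrank ℝ (LinearMap.ker A.mulVecLin) = n - m := by
    have e := LinearMap.finrank_range_add_finrank_ker A.mulVecLin
    rw [Matrix.rank] at hrank
    have hn : Module.finrank ℝ (Fin n → ℝ) = n := by simp
    omega
  let b : Basis (Fin (n - m)) ℝ (LinearMap.ker A.mulVecLin) :=
    Module.finBasisOfFinrankEq ℝ _ hcard
  -- the family of vectors in ℝ^{2n+1} (embedded kernel basis, in W₀)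
  let v : Fin (n - m) → Idx n → ℝ := fun i =>
    Sum.elim (fun _ => 0) (Sum.elim (fun _ => 0) (fun j => (b i : Fin n → ℝ) j))
  let M : Matrix (Idx n) (Fin (n - m)) ℝ := Matrix.of fun p i => v i p
  let G : Matrix (Idx n) (Idx n) ℝ := Matrix.of fun p q => ∑ i, v i p * v i q
  have hGapp : ∀ p q, G p q = ∑ i, v i p * v i q := fun p q => rfl
  have hGM : G = M * Mᵀ := by
    ext p q
    rw [hGapp, Matrix.mul_apply]
    rfl
  have hMH : Mᴴ = Mᵀ := by
    ext i p
    simp [Matrix.conjTranspose_apply]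
  have hGpsd : G.PosSemidef := by
    rw [hGM, ← hMH]
    exact Matrix.posSemidef_self_mul_conjTranspose M
  have hv0 : ∀ i (x : Fin 1), v i (Sum.inl x) = 0 := fun i x => rfl
  have hv1 : ∀ i (j : Fin n), v i (Sum.inr (Sum.inl j)) = 0 := fun i j => rfl
  have hGz1 : ∀ (x : Fin 1) (q : Idx n), G (Sum.inl x) q = 0 := by
    intro x q; rw [hGapp]
    apply Finset.sum_eq_zero
    intro i _; rw [hv0, zero_mul]
  have hGz2 : ∀ (j : Fin n) (q : Idx n), G (Sum.inr (Sum.inl j)) q = 0 := by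
    intro j q; rw [hGapp]
    apply Finset.sum_eq_zero
    intro i _; rw [hv1, zero_mul]
  have hGz1' : ∀ (x : Fin 1) (q : Idx n), G q (Sum.inl x) = 0 := by
    intro x q; rw [hGapp]
    apply Finset.sum_eq_zero
    intro i _; rw [hv0, mul_zero]
  have hGz2' : ∀ (j : Fin n) (q : Idx n), G q (Sum.inr (Sum.inl j)) = 0 := by
    intro j q; rw [hGapp]
    apply Finset.sum_eq_zero
    intro i _; rw [hv1, mul_zero]
  -- traces of all problem matrices against G vanish
  have htrace : ∀ C : Matrix (Idx n) (Idx n) ℝ,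
      (∀ j j' : Fin n, C (Sum.inr (Sum.inr j)) (Sum.inr (Sum.inr j')) = 0) →
      (C * G).trace = 0 := by
    intro C hC
    rw [Matrix.trace]
    apply Finset.sum_eq_zero
    rintro (x | j | j) -
    · rw [Matrix.diag_apply, Matrix.mul_apply]
      apply Finset.sum_eq_zero
      intro q _
      rw [hGz1', mul_zero]
    · rw [Matrix.diag_apply, Matrix.mul_apply]
      apply Finset.sum_eq_zero
      intro q _
      rw [hGz2', mul_zero]
    · rw [Matrix.diag_apply, Matrix.mul_apply]
      apply Finset.sum_eq_zero
      rintro (z | z | z) -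
      · rw [hGz1, mul_zero]
      · rw [hGz2, mul_zero]
      · rw [hC, zero_mul]
  have htA : ∀ j, (Amat A j * G).trace = 0 := fun j => htrace _ (fun _ _ => rfl)
  have htQ : (Qmat n * G).trace = 0 := htrace _ (fun _ _ => rfl)
  have htE0 : (E0mat n * G).trace = 0 := htrace _ (fun _ _ => rfl)
  have htE : ∀ i, (Emat n i * G).trace = 0 := fun i => htrace _ (fun _ _ => rfl)
  have htC : ∀ i, (Cmat n i * G).trace = 0 := fun i => htrace _ (fun _ _ => rfl)
  -- X + G is feasible with the same objective value
  obtain ⟨hXpsd, hXA, hXE0, hXEC⟩ := hXfeas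
  have hfeas : BidualFeasible A y (X + G) := by
    refine ⟨psd_add' hXpsd hGpsd, fun j => ?_, ?_, fun i => ⟨?_, ?_⟩⟩
    · rw [mul_add, Matrix.trace_add, hXA j, htA j, add_zero]
    · rw [mul_add, Matrix.trace_add, hXE0, htE0, add_zero]
    · rw [mul_add, Matrix.trace_add, (hXEC i).1, htE i, add_zero]
    · rw [mul_add, Matrix.trace_add, (hXEC i).2, htC i, add_zero]
  have hobj : (Qmat n * (X + G)).trace = (Qmat n * X).trace := by
    rw [mul_add, Matrix.trace_add, htQ, add_zero]
  have hopt : BidualOptimal A y (X + G) := by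
    refine ⟨hfeas, fun Y hY => ?_⟩
    rw [hobj]
    exact hXopt Y hY
  -- rank of G equals n - m
  have hbli : LinearIndependent ℝ
      (fun i => ((b i : LinearMap.ker A.mulVecLin) : Fin n → ℝ)) :=
    b.linearIndependent.map' (LinearMap.ker A.mulVecLin).subtype
      (Submodule.ker_subtype _)
  have hli : LinearIndependent ℝ v := by
    rw [Fintype.linearIndependent_iff] at hbli ⊢
    intro c hc
    apply hbli c
    funext j
    have := congrFun hc (Sum.inr (Sum.inr j))
    simpa [v, Finset.sum_apply] using this
  have hrankM : M.rank = n - m := by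
    rw [Matrix.rank_eq_finrank_span_cols]
    have hrange : Set.range M.col = Set.range v := rfl
    rw [hrange, finrank_span_eq_card hli, Fintype.card_fin]
  have hrankG : G.rank = n - m := by
    rw [hGM, Matrix.rank_self_mul_transpose, hrankM]
  exact ⟨X + G, hopt, hrankG ▸ rank_le_psd_add' hXpsd hGpsd⟩
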